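/- arXiv:2603.20396 — 2 statements merged into one kernel-verified Lean document; each statement's English description precedes it below -/
import Mathlib

section
/- Let A_1 = ℕ with generator G = {1}, let b ≥ 2 be an integer, and let M = { b^{b^j} : j ≥ 0 }. Then the macro set M has double-logarithmic density (the number of macros of value at most r is the number of j with b^{b^j} ≤ r, i.e., at most log_b log_b r + 1), and there exist constants c_1, c_2 > 0 depending only on b such that c_1 · s^{b/(b−1)} ≤ f_{G'}(s) ≤ c_2 · s^{(2b−1)/(b−1)} for all integers s ≥ 1. -/
open scoped ENNReal

/-- The length of `x ∈ ℕ = A_1` with respect to a generating set `S ⊆ ℕ`: the minimum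
number of elements of `S` (with repetition) summing to `x`; `⊤` if not representable. -/
noncomputable def nlen (S : Set ℕ) (x : ℕ) : ℕ∞ :=
  sInf {k : ℕ∞ | ∃ l : Multiset ℕ, (∀ m ∈ l, m ∈ S) ∧ l.sum = x ∧ (l.card : ℕ∞) = k}

/-- The expansion function `f_{G'}(s) = sup { r ∈ ℕ : B_G(r) ⊆ B_{G'}(s) }` for `A_1 = ℕ`
with `G = {1}`, valued in `ℝ≥0∞` (so `⊤` means the inclusion holds for every radius). -/
noncomputable def nexpansion (S : Set ℕ) (s : ℕ) : ℝ≥0∞ :=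
  sSup {x : ℝ≥0∞ | ∃ r : ℕ, x = (r : ℝ≥0∞) ∧ ∀ y : ℕ, y ≤ r → nlen S y ≤ (s : ℕ∞)}

lemma nlen_le_card {S : Set ℕ} {y : ℕ} {l : Multiset ℕ}
    (h1 : ∀ m ∈ l, m ∈ S) (h2 : l.sum = y) : nlen S y ≤ l.card :=
  sInf_le ⟨l, h1, h2, rfl⟩

lemma nlen_ones {S : Set ℕ} (h1 : (1:ℕ) ∈ S) (y : ℕ) : nlen S y ≤ y := by
  have := nlen_le_card (S := S) (y := y) (l := Multiset.replicate y 1)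
    (by intro m hm; rw [Multiset.eq_of_mem_replicate hm]; exact h1)
    (by simp [Multiset.sum_replicate])
  simpa using this

-- mj
def mj (b j : ℕ) : ℕ := b ^ (b ^ j)

lemma mj_pos {b : ℕ} (hb : 2 ≤ b) (j : ℕ) : 0 < mj b j :=
  Nat.pow_pos (by omega)

lemma mj_two_le {b : ℕ} (hb : 2 ≤ b) (j : ℕ) : 2 ≤ mj b j := by
  calc 2 ≤ b := hb
  _ = b ^ 1 := (pow_one b).symm
  _ ≤ b ^ (b ^ j) := Nat.pow_le_pow_right (by omega) (Nat.one_le_two_pow.trans (Nat.pow_le_pow_left hb j))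

lemma mj_succ {b : ℕ} (j : ℕ) : mj b (j+1) = (mj b j) ^ b := by
  rw [mj, mj, ← pow_mul, ← pow_succ]

lemma mj_mono {b : ℕ} (hb : 2 ≤ b) : StrictMono (mj b) := by
  intro i j hij
  apply Nat.pow_lt_pow_right (by omega)
  exact Nat.pow_lt_pow_right (by omega) hij

lemma mj_zero {b : ℕ} : mj b 0 = b := by simp [mj]

lemma lt_mj_self {b : ℕ} (hb : 2 ≤ b) (y : ℕ) : y < mj b y := by
  calc y < 2 ^ y := y.lt_two_pow_self
  _ ≤ 2 ^ (2 ^ y) := Nat.pow_le_pow_right (by omega) (Nat.le_of_lt (y.lt_two_pow_self))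
  _ ≤ b ^ (b ^ y) := Nat.pow_le_pow_left hb _ |>.trans (Nat.pow_le_pow_right (by omega) (Nat.pow_le_pow_left hb y)) |>.trans (le_refl _)

def cj (b : ℕ) : ℕ → ℕ
  | 0 => b - 1
  | (j+1) => cj b j + ((mj b j) ^ (b-1) - 1)

lemma cj_bound {b : ℕ} (hb : 2 ≤ b) : ∀ j, cj b (j+1) ≤ (b-1) + 2 * (mj b j) ^ (b-1) := by
  intro j
  induction j with
  | zero => simp [cj]; omega
  | succ k ih =>
      have h2 : 2 * (mj b k) ^ (b-1) ≤ (mj b (k+1)) ^ (b-1) := by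
        have hk : 2 ≤ (mj b k) ^ (b-1) := by
          calc 2 ≤ mj b k := mj_two_le hb k
          _ = (mj b k) ^ 1 := (pow_one _).symm
          _ ≤ (mj b k) ^ (b-1) := Nat.pow_le_pow_right (mj_pos hb k) (by omega)
        calc 2 * (mj b k) ^ (b-1) ≤ (mj b k) ^ (b-1) * (mj b k) ^ (b-1) :=
              Nat.mul_le_mul_right _ hk
        _ = (mj b k) ^ ((b-1) + (b-1)) := by rw [pow_add]
        _ ≤ ((mj b k) ^ b) ^ (b-1) := by
              rw [← pow_mul]
              exact Nat.pow_le_pow_right (mj_pos hb k) (by nlinarith)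
        _ = (mj b (k+1)) ^ (b-1) := by rw [mj_succ]
      calc cj b (k+2) = cj b (k+1) + ((mj b (k+1)) ^ (b-1) - 1) := rfl
      _ ≤ (b-1) + 2 * (mj b k) ^ (b-1) + ((mj b (k+1)) ^ (b-1) - 1) := by omega
      _ ≤ (b-1) + 2 * (mj b (k+1)) ^ (b-1) := by omega

lemma rep_bound {b : ℕ} (hb : 2 ≤ b) (S : Set ℕ) (h1 : (1:ℕ) ∈ S)
    (hm : ∀ j, mj b j ∈ S) :
    ∀ j, ∀ y, y < mj b j → ∃ l : Multiset ℕ,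
      (∀ m ∈ l, m ∈ S) ∧ l.sum = y ∧ l.card ≤ cj b j := by
  intro j
  induction j with
  | zero =>
      intro y hy
      rw [mj_zero] at hy
      refine ⟨Multiset.replicate y 1, ?_, by simp [Multiset.sum_replicate], by simp [cj]; omega⟩
      intro m hm'; rw [Multiset.eq_of_mem_replicate hm']; exact h1
  | succ j ih =>
      intro y hy
      set g := mj b j with hg
      have hgpos : 0 < g := mj_pos hb j
      obtain ⟨l₀, hl₀S, hl₀sum, hl₀card⟩ := ih (y % g) (Nat.mod_lt _ hgpos)
      refine ⟨Multiset.replicate (y / g) g + l₀, ?_, ?_, ?_⟩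
      · intro m hm'
        rcases Multiset.mem_add.mp hm' with h | h
        · rw [Multiset.eq_of_mem_replicate h]; exact hm j
        · exact hl₀S m h
      · simp only [Multiset.sum_add, Multiset.sum_replicate, hl₀sum, smul_eq_mul]
        exact Nat.div_add_mod' y g
      · have hq : y / g ≤ g ^ (b-1) - 1 := by
          have : y / g < g ^ (b-1) := by
            apply Nat.div_lt_of_lt_mul
            calc y < mj b (j+1) := hy
            _ = g ^ b := mj_succ j
            _ = g ^ (b - 1) * g := by rw [← pow_succ]; congr 1; omega
            _ = g * g ^ (b-1) := by ring
          omega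
        simp only [Multiset.card_add, Multiset.card_replicate]
        calc y / g + l₀.card ≤ (g ^ (b-1) - 1) + cj b j := by omega
        _ = cj b (j+1) := by rw [cj, hg]; omega

lemma nlen_lb {b : ℕ} (hb : 2 ≤ b) (M : Set ℕ) (hM : M = {x | ∃ j : ℕ, x = b ^ (b ^ j)})
    (s t : ℕ) (hy : (s+1) * mj b t < mj b (t+1)) :
    (s : ℕ∞) < nlen (insert 1 M) ((s+1) * mj b t) := by
  set y := (s+1) * mj b t with hy'
  have hlb : ((s:ℕ∞) + 1) ≤ nlen (insert 1 M) y := by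
    apply le_sInf
    rintro k ⟨l, hlS, hlsum, hlcard⟩
    have hbound : ∀ e ∈ l, e ≤ mj b t := by
      intro e he
      rcases Set.mem_insert_iff.mp (hlS e he) with h | h
      · subst h; exact mj_pos hb t
      · rw [hM] at h
        obtain ⟨i, rfl⟩ := h
        have hey : (mj b i : ℕ) ≤ y := hlsum ▸ Multiset.le_sum_of_mem he
        by_contra hgt
        push_neg at hgt
        have : t + 1 ≤ i := by
          by_contra hi
          push_neg at hi
          exact absurd ((mj_mono hb).le_iff_le.mpr (by omega : i ≤ t)) (not_le.mpr hgt)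
        have := (mj_mono hb).le_iff_le.mpr this
        have : mj b (t+1) ≤ y := le_trans this hey
        omega
    have hsum_le : y ≤ l.card * mj b t := by
      calc y = l.sum := hlsum.symm
      _ ≤ l.card • mj b t := Multiset.sum_le_card_nsmul l _ hbound
      _ = l.card * mj b t := by rw [smul_eq_mul]
    have hcard : s + 1 ≤ l.card := by
      have hpos := mj_pos hb t
      by_contra h
      push_neg at h
      have : l.card * mj b t < (s+1) * mj b t := Nat.mul_lt_mul_right hpos |>.mpr (by omega)
      omega
    rw [← hlcard]
    exact_mod_cast Nat.cast_le.mpr hcard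
  calc (s : ℕ∞) < (s : ℕ∞) + 1 := by exact_mod_cast Nat.lt_succ_self s
  _ ≤ _ := hlb

lemma root_le {x c : ℝ} (hx : 0 ≤ x) {p : ℕ} (hp : 1 ≤ p) (h : x ^ p ≤ c) :
    x ≤ c ^ ((p:ℝ)⁻¹) := by
  have hc : 0 ≤ c := le_trans (pow_nonneg hx p) h
  have hxp : x = (x ^ p : ℝ) ^ ((p:ℝ)⁻¹) := by
    rw [← Real.rpow_natCast x p, ← Real.rpow_mul hx, mul_inv_cancel₀ (by positivity), Real.rpow_one]
  rw [hxp]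
  exact Real.rpow_le_rpow (pow_nonneg hx p) h (by positivity)

lemma rep_real {b : ℕ} (hb : 2 ≤ b) (S : Set ℕ) (h1 : (1:ℕ) ∈ S)
    (hmS : ∀ j, mj b j ∈ S) (y : ℕ) (hy : b ≤ y) :
    ∃ l : Multiset ℕ, (∀ m ∈ l, m ∈ S) ∧ l.sum = y ∧
      (l.card : ℝ) ≤ 3 * (y:ℝ) ^ (((b:ℝ)-1)/b) + ((b:ℝ)-1) := by
  have hbR : (0:ℝ) < b := by positivity
  set e : ℝ := ((b:ℝ)-1)/b with he
  have hex : ∃ j, y < mj b j := ⟨y, lt_mj_self hb y⟩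
  have hj : y < mj b (Nat.find hex) := Nat.find_spec hex
  have hj0 : Nat.find hex ≠ 0 := by
    intro h0
    rw [h0, mj_zero] at hj
    omega
  obtain ⟨k, hk⟩ : ∃ k, Nat.find hex = k + 1 := ⟨Nat.find hex - 1, by omega⟩
  have hky : mj b k ≤ y := not_lt.mp (Nat.find_min hex (by omega))
  rw [hk] at hj
  have hjb : y < (mj b k) ^ b := by rw [← mj_succ]; exact hj
  set g := mj b k with hg
  have hgpos : 0 < g := mj_pos hb k
  obtain ⟨l₀, hl₀S, hl₀sum, hl₀card⟩ :=
    rep_bound hb S h1 hmS k (y % g) (Nat.mod_lt _ hgpos)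
  refine ⟨Multiset.replicate (y / g) g + l₀, ?_, ?_, ?_⟩
  · intro m hm'
    rcases Multiset.mem_add.mp hm' with h | h
    · rw [Multiset.eq_of_mem_replicate h]; exact hmS k
    · exact hl₀S m h
  · simp only [Multiset.sum_add, Multiset.sum_replicate, hl₀sum, smul_eq_mul]
    exact Nat.div_add_mod' y g
  · -- real estimate
    have hY0 : (0:ℝ) < y := by exact_mod_cast lt_of_lt_of_le (by omega : 0 < b) hy
    have hYe0 : (0:ℝ) ≤ (y:ℝ) ^ e := Real.rpow_nonneg hY0.le e
    have hgR : (0:ℝ) < (g:ℝ) := by exact_mod_cast hgpos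
    -- Y^(1/b) ≤ g
    have hroot : (y:ℝ) ^ ((b:ℝ)⁻¹) ≤ (g:ℝ) := by
      have h1' : (y:ℝ) ≤ ((g:ℝ)) ^ b := by exact_mod_cast hjb.le
      calc (y:ℝ) ^ ((b:ℝ)⁻¹) ≤ (((g:ℝ)) ^ b) ^ ((b:ℝ)⁻¹) :=
            Real.rpow_le_rpow hY0.le h1' (by positivity)
      _ = (g:ℝ) := by
            rw [← Real.rpow_natCast (g:ℝ) b, ← Real.rpow_mul hgR.le,
              mul_inv_cancel₀ (by positivity), Real.rpow_one]
    have hrootpos : (0:ℝ) < (y:ℝ) ^ ((b:ℝ)⁻¹) := Real.rpow_pos_of_pos hY0 _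
    have hdiv : (y:ℝ) / (y:ℝ) ^ ((b:ℝ)⁻¹) = (y:ℝ) ^ e := by
      rw [he]
      have : ((b:ℝ)-1)/b = 1 - (b:ℝ)⁻¹ := by field_simp
      rw [this, Real.rpow_sub hY0, Real.rpow_one]
    -- quotient bound
    have hq : ((y / g : ℕ) : ℝ) ≤ (y:ℝ) ^ e := by
      have h1' : ((y / g : ℕ) : ℝ) * (g:ℝ) ≤ (y:ℝ) := by
        exact_mod_cast Nat.div_mul_le_self y g
      have h2' : ((y / g : ℕ) : ℝ) ≤ (y:ℝ) / (g:ℝ) := (le_div_iff₀ hgR).mpr h1'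
      calc ((y / g : ℕ) : ℝ) ≤ (y:ℝ) / (g:ℝ) := h2'
      _ ≤ (y:ℝ) / (y:ℝ) ^ ((b:ℝ)⁻¹) := by
            apply div_le_div_of_nonneg_left hY0.le hrootpos hroot
      _ = (y:ℝ) ^ e := hdiv
    -- cj bound
    have hcjb : ((cj b k : ℕ) : ℝ) ≤ ((b:ℝ)-1) + 2 * (y:ℝ) ^ e := by
      cases k with
      | zero =>
          have : cj b 0 = b - 1 := rfl
          rw [this]
          have : ((b - 1 : ℕ) : ℝ) = (b:ℝ) - 1 := by
            rw [Nat.cast_sub (by omega)]; simp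
          rw [this]
          nlinarith
      | succ u =>
          have hcb := cj_bound hb u
          have hub : (mj b u) ^ b ≤ y := by rw [← mj_succ]; exact hky
          have huroot : (mj b u : ℝ) ≤ (y:ℝ) ^ ((b:ℝ)⁻¹) := by
            apply root_le (by positivity) (by omega)
            exact_mod_cast hub
          have hupow : ((mj b u ^ (b-1) : ℕ) : ℝ) ≤ (y:ℝ) ^ e := by
            push_cast
            calc ((mj b u : ℕ):ℝ) ^ (b-1) ≤ ((y:ℝ) ^ ((b:ℝ)⁻¹)) ^ (b-1) :=
                  pow_le_pow_left₀ (by positivity) huroot _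
            _ = (y:ℝ) ^ e := by
                  rw [← Real.rpow_natCast ((y:ℝ) ^ ((b:ℝ)⁻¹)) (b-1),
                    ← Real.rpow_mul hY0.le]
                  congr 1
                  rw [Nat.cast_sub (by omega : 1 ≤ b)]
                  field_simp [he]
                  rw [he, Nat.cast_one]; field_simp
          have hcast : ((cj b (u+1) : ℕ) : ℝ) ≤ ((b - 1 : ℕ):ℝ) + 2 * ((mj b u ^ (b-1) : ℕ):ℝ) := by
            exact_mod_cast hcb
          have hb1 : ((b - 1 : ℕ) : ℝ) = (b:ℝ) - 1 := by
            rw [Nat.cast_sub (by omega)]; simp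
          rw [hb1] at hcast
          nlinarith
    simp only [Multiset.card_add, Multiset.card_replicate]
    push_cast
    have hcard : (l₀.card : ℝ) ≤ ((cj b k : ℕ) : ℝ) := by exact_mod_cast hl₀card
    nlinarith

lemma nlen_le_budget {b : ℕ} (hb : 2 ≤ b) (M : Set ℕ)
    (hM : M = {x | ∃ j : ℕ, x = b ^ (b ^ j)}) (s : ℕ) (hs : 1 ≤ s) (y : ℕ)
    (hy : (y:ℝ) ≤ (1/(64*(b:ℝ))) * (s:ℝ) ^ ((b:ℝ)/((b:ℝ)-1))) :
    nlen (insert 1 M) y ≤ (s : ℕ∞) := by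
  have h1S : (1:ℕ) ∈ insert 1 M := Set.mem_insert _ _
  have hmS : ∀ j, mj b j ∈ insert 1 M := fun j => Set.mem_insert_iff.mpr (Or.inr (by rw [hM]; exact ⟨j, rfl⟩))
  have hbR : (2:ℝ) ≤ (b:ℝ) := by exact_mod_cast hb
  have hb1 : (1:ℝ) ≤ (b:ℝ) - 1 := by linarith
  have hsR : (1:ℝ) ≤ (s:ℝ) := by exact_mod_cast hs
  set K : ℝ := 1/(64*(b:ℝ)) with hK
  have hK0 : 0 < K := by rw [hK]; positivity
  have hK64 : K ≤ 1/64 := by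
    rw [hK, div_le_div_iff₀ (by positivity) (by norm_num)]
    nlinarith
  set E : ℝ := (b:ℝ)/((b:ℝ)-1) with hE
  by_cases hcase : s ≤ 2 * b
  · -- small s: y ≤ s
    have hsE : (s:ℝ) ^ E ≤ (s:ℝ) * (2*(b:ℝ)) := by
      have h1' : E = 1 + ((b:ℝ)-1)⁻¹ := by rw [hE]; field_simp; ring
      have h2' : (s:ℝ) ^ E = (s:ℝ) * (s:ℝ) ^ (((b:ℝ)-1)⁻¹) := by
        rw [h1', Real.rpow_add (by linarith), Real.rpow_one]
      have h3' : (s:ℝ) ^ (((b:ℝ)-1)⁻¹) ≤ (s:ℝ) ^ (1:ℝ) := by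
        apply Real.rpow_le_rpow_of_exponent_le hsR
        rw [inv_le_one_iff₀]; right; linarith
      rw [h2']
      have h4' : (s:ℝ) ≤ 2 * (b:ℝ) := by exact_mod_cast hcase
      rw [Real.rpow_one] at h3'
      nlinarith
    have hys : (y:ℝ) ≤ (s:ℝ) := by
      calc (y:ℝ) ≤ K * ((s:ℝ) * (2*(b:ℝ))) := by
            refine le_trans hy (mul_le_mul_of_nonneg_left hsE hK0.le)
      _ = (s:ℝ) * (2 * (b:ℝ) * K) := by ring
      _ ≤ (s:ℝ) * 1 := by
            apply mul_le_mul_of_nonneg_left _ (by linarith)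
            rw [hK, div_eq_mul_inv, one_mul]
            rw [mul_inv_le_iff₀ (by positivity : (0:ℝ) < 64 * (b:ℝ))]
            nlinarith
      _ = (s:ℝ) := mul_one _
    have : y ≤ s := by exact_mod_cast hys
    calc nlen (insert 1 M) y ≤ (y : ℕ∞) := nlen_ones h1S y
    _ ≤ (s : ℕ∞) := by exact_mod_cast this
  · push_neg at hcase
    by_cases hyb : y < b
    · have : y ≤ s := by omega
      calc nlen (insert 1 M) y ≤ (y : ℕ∞) := nlen_ones h1S y
      _ ≤ (s : ℕ∞) := by exact_mod_cast this
    · push_neg at hyb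
      obtain ⟨l, hlS, hlsum, hlcard⟩ := rep_real hb _ h1S hmS y hyb
      set e : ℝ := ((b:ℝ)-1)/b with he
      have hY0 : (0:ℝ) ≤ (y:ℝ) := by positivity
      have hsE0 : (0:ℝ) ≤ (s:ℝ) ^ E := Real.rpow_nonneg (by positivity) _
      -- (y)^e ≤ K^e * s
      have hYe : (y:ℝ) ^ e ≤ K ^ e * (s:ℝ) := by
        have h1' : (y:ℝ) ^ e ≤ (K * (s:ℝ) ^ E) ^ e := by
          apply Real.rpow_le_rpow hY0 hy (by rw [he]; positivity)
        have h2' : (K * (s:ℝ) ^ E) ^ e = K ^ e * ((s:ℝ) ^ E) ^ e :=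
          Real.mul_rpow hK0.le hsE0
        have h3' : ((s:ℝ) ^ E) ^ e = (s:ℝ) := by
          rw [← Real.rpow_mul (by positivity)]
          have : E * e = 1 := by
            rw [hE, he]; field_simp
          rw [this, Real.rpow_one]
        rw [h2', h3'] at h1'
        exact h1'
      have hKe : K ^ e ≤ 1/8 := by
        have h12 : K ^ e ≤ K ^ ((1:ℝ)/2) := by
          apply Real.rpow_le_rpow_of_exponent_ge hK0 (by linarith)
          rw [he, div_le_div_iff₀ (by norm_num) (by linarith)]
          linarith
        have hx0 : (0:ℝ) ≤ K ^ ((1:ℝ)/2) := Real.rpow_nonneg hK0.le _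
        have hx2 : (K ^ ((1:ℝ)/2)) ^ (2:ℕ) = K := by
          rw [← Real.rpow_natCast (K ^ ((1:ℝ)/2)) 2, ← Real.rpow_mul hK0.le]
          norm_num
        have : K ^ ((1:ℝ)/2) ≤ 1/8 := by nlinarith
        linarith
      have hcardR : (l.card : ℝ) ≤ (s:ℝ) := by
        have hbs : (b:ℝ) - 1 ≤ (s:ℝ)/2 := by
          have : (2*b : ℕ) < s := hcase
          have : (2*(b:ℝ)) < (s:ℝ) := by exact_mod_cast this
          linarith
        have hYe' : (y:ℝ) ^ e ≤ (s:ℝ)/8 := by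
          calc (y:ℝ) ^ e ≤ K ^ e * (s:ℝ) := hYe
          _ ≤ (1/8) * (s:ℝ) := mul_le_mul_of_nonneg_right hKe (by positivity)
          _ = (s:ℝ)/8 := by ring
        calc (l.card : ℝ) ≤ 3 * (y:ℝ) ^ e + ((b:ℝ)-1) := hlcard
        _ ≤ 3 * ((s:ℝ)/8) + (s:ℝ)/2 := by
              have := Real.rpow_nonneg hY0 e
              nlinarith
        _ ≤ (s:ℝ) := by linarith
      have hcard : l.card ≤ s := by exact_mod_cast hcardR
      calc nlen (insert 1 M) y ≤ (l.card : ℕ∞) := nlen_le_card hlS hlsum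
      _ ≤ (s : ℕ∞) := by exact_mod_cast hcard

/-- **Double-logarithmic density gives polynomial expansion.**
For `A_1 = ℕ` with `G = {1}`, `b ≥ 2`, and `M = { b^{b^j} : j ≥ 0 }`, the macro set has
double-logarithmic density (for `r ≥ b`, the number of macros of value at most `r` is at
most `log_b log_b r + 1`), and there are constants `c₁, c₂ > 0` depending only on `b`
with `c₁·s^{b/(b-1)} ≤ f_{G'}(s) ≤ c₂·s^{(2b-1)/(b-1)}` for all `s ≥ 1`. -/
theorem double_log_density_polynomial_expansion
    (b : ℕ) (hb : 2 ≤ b)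
    (M : Set ℕ) (hM : M = {x | ∃ j : ℕ, x = b ^ (b ^ j)}) :
    (∀ r : ℕ, b ≤ r →
      (({x ∈ M | x ≤ r}).ncard : ℝ) ≤ Real.logb b (Real.logb b r) + 1) ∧
    (∃ c₁ c₂ : ℝ, 0 < c₁ ∧ 0 < c₂ ∧ ∀ s : ℕ, 1 ≤ s →
      ENNReal.ofReal (c₁ * (s : ℝ) ^ ((b : ℝ) / ((b : ℝ) - 1)))
          ≤ nexpansion (insert 1 M) s ∧
      nexpansion (insert 1 M) s
          ≤ ENNReal.ofReal (c₂ * (s : ℝ) ^ ((2 * (b : ℝ) - 1) / ((b : ℝ) - 1)))) := by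
  have hbR : (2:ℝ) ≤ (b:ℝ) := by exact_mod_cast hb
  have hbR1 : (1:ℝ) < (b:ℝ) := by linarith
  constructor
  · -- density
    intro r hr
    have hrR : (b:ℝ) ≤ (r:ℝ) := by exact_mod_cast hr
    have hr0 : (0:ℝ) < (r:ℝ) := by linarith
    have hlogr : (1:ℝ) ≤ Real.logb b r := by
      rw [Real.le_logb_iff_rpow_le hbR1 hr0, Real.rpow_one]
      exact hrR
    have hlogr0 : (0:ℝ) < Real.logb b r := by linarith
    set x : ℝ := Real.logb b (Real.logb b r) with hx
    have hx0 : (0:ℝ) ≤ x := Real.logb_nonneg hbR1 hlogr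
    set N : ℕ := Nat.floor x with hN
    have hsub : {z ∈ M | z ≤ r} ⊆ ↑((Finset.Iic N).image (fun j => b ^ (b ^ j))) := by
      rintro z ⟨hzM, hzr⟩
      rw [hM] at hzM
      obtain ⟨j, rfl⟩ := hzM
      simp only [Finset.coe_image, Set.mem_image, Finset.mem_coe, Finset.mem_Iic]
      refine ⟨j, ?_, rfl⟩
      apply Nat.le_floor
      rw [hx, Real.le_logb_iff_rpow_le hbR1 hlogr0,
        Real.le_logb_iff_rpow_le hbR1 hr0]
      have h1' : ((b:ℝ) ^ ((j:ℕ):ℝ)) = ((b ^ j : ℕ) : ℝ) := by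
        rw [Real.rpow_natCast]; push_cast; ring
      rw [h1']
      have h2' : ((b:ℝ) ^ (((b ^ j : ℕ)):ℝ)) = ((b ^ (b ^ j) : ℕ) : ℝ) := by
        rw [Real.rpow_natCast]; push_cast; ring
      rw [h2']
      exact_mod_cast hzr
    have hcard : ({z ∈ M | z ≤ r}).ncard ≤ N + 1 := by
      calc ({z ∈ M | z ≤ r}).ncard
          ≤ (↑((Finset.Iic N).image (fun j => b ^ (b ^ j))) : Set ℕ).ncard :=
            Set.ncard_le_ncard hsub (Finset.finite_toSet _)
      _ = ((Finset.Iic N).image (fun j => b ^ (b ^ j))).card := Set.ncard_coe_finset _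
      _ ≤ (Finset.Iic N).card := Finset.card_image_le
      _ = N + 1 := Nat.card_Iic N
    calc (({z ∈ M | z ≤ r}).ncard : ℝ) ≤ (N:ℝ) + 1 := by exact_mod_cast hcard
    _ ≤ x + 1 := by
        have := Nat.floor_le hx0
        linarith
  · -- expansion
    have h1S : (1:ℕ) ∈ insert 1 M := Set.mem_insert _ _
    have hb1 : (1:ℝ) ≤ (b:ℝ) - 1 := by linarith
    refine ⟨1/(128*(b:ℝ)), 2*(b:ℝ)+8, by positivity, by positivity, ?_⟩
    intro s hs
    have hsR : (1:ℝ) ≤ (s:ℝ) := by exact_mod_cast hs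
    set E : ℝ := (b:ℝ)/((b:ℝ)-1) with hE
    set K : ℝ := 1/(64*(b:ℝ)) with hK
    have hK0 : (0:ℝ) < K := by positivity
    have hsE0 : (0:ℝ) < (s:ℝ) ^ E := Real.rpow_pos_of_pos (by linarith) _
    constructor
    · -- lower bound
      set r₀ : ℕ := max 1 (Nat.floor (K * (s:ℝ) ^ E)) with hr₀
      have hmem : ∀ y : ℕ, y ≤ r₀ → nlen (insert 1 M) y ≤ (s : ℕ∞) := by
        intro y hy
        rcases max_cases 1 (Nat.floor (K * (s:ℝ) ^ E)) with ⟨hmax, _⟩ | ⟨hmax, _⟩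
        · rw [hr₀, hmax] at hy
          calc nlen (insert 1 M) y ≤ (y:ℕ∞) := nlen_ones h1S y
          _ ≤ (s:ℕ∞) := by exact_mod_cast hy.trans hs
        · rw [hr₀, hmax] at hy
          apply nlen_le_budget hb M hM s hs y
          calc (y:ℝ) ≤ (Nat.floor (K * (s:ℝ) ^ E) : ℝ) := by exact_mod_cast hy
          _ ≤ K * (s:ℝ) ^ E := Nat.floor_le (by positivity)
      have hle : ENNReal.ofReal (1/(128*(b:ℝ)) * (s:ℝ) ^ E) ≤ (r₀ : ℝ≥0∞) := by
        rw [← ENNReal.ofReal_natCast r₀]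
        apply ENNReal.ofReal_le_ofReal
        by_cases hcase : K * (s:ℝ) ^ E < 1
        · have : 1/(128*(b:ℝ)) * (s:ℝ) ^ E ≤ K * (s:ℝ) ^ E := by
            apply mul_le_mul_of_nonneg_right _ hsE0.le
            rw [hK, div_le_div_iff₀ (by positivity) (by positivity)]
            nlinarith
          have hr1 : (1:ℝ) ≤ (r₀:ℝ) := by
            have : 1 ≤ r₀ := le_max_left _ _
            exact_mod_cast this
          linarith
        · push_neg at hcase
          have hfl1 : 1 ≤ Nat.floor (K * (s:ℝ) ^ E) := Nat.le_floor (by simpa using hcase)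
          have hfl : K * (s:ℝ) ^ E ≤ 2 * (Nat.floor (K * (s:ℝ) ^ E) : ℝ) := by
            have h1' := Nat.lt_floor_add_one (K * (s:ℝ) ^ E)
            have h2' : (1:ℝ) ≤ (Nat.floor (K * (s:ℝ) ^ E) : ℝ) := by exact_mod_cast hfl1
            linarith
          have hr2 : (Nat.floor (K * (s:ℝ) ^ E) : ℝ) ≤ (r₀:ℝ) := by
            have : Nat.floor (K * (s:ℝ) ^ E) ≤ r₀ := le_max_right _ _
            exact_mod_cast this
          have : 1/(128*(b:ℝ)) * (s:ℝ) ^ E = (K * (s:ℝ) ^ E)/2 := by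
            rw [hK]; ring
          rw [this]
          linarith
      refine le_trans hle (le_sSup ⟨r₀, rfl, hmem⟩)
    · -- upper bound
      set F : ℝ := (2*(b:ℝ)-1)/((b:ℝ)-1) with hF
      have hF0 : 0 ≤ F := by rw [hF]; apply div_nonneg <;> linarith
      have hex : ∃ i, s + 1 < (mj b i) ^ (b - 1) := by
        refine ⟨s + 1, ?_⟩
        calc s + 1 < 2 ^ (s+1) := (s+1).lt_two_pow_self
        _ ≤ 2 ^ ((b-1) * b ^ (s+1)) := by
            apply Nat.pow_le_pow_right (by omega)
            have h1' : s + 1 ≤ 2 ^ (s+1) := ((s+1).lt_two_pow_self).le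
            have h2' : 2 ^ (s+1) ≤ b ^ (s+1) := Nat.pow_le_pow_left hb _
            have h3' : b ^ (s+1) ≤ (b-1) * b ^ (s+1) := by
              have : 1 ≤ b - 1 := by omega
              calc b ^ (s+1) = 1 * b ^ (s+1) := (one_mul _).symm
              _ ≤ (b-1) * b ^ (s+1) := Nat.mul_le_mul_right _ this
            omega
        _ ≤ b ^ ((b-1) * b ^ (s+1)) := Nat.pow_le_pow_left hb _
        _ = (mj b (s+1)) ^ (b-1) := by rw [mj, ← pow_mul, mul_comm]
      obtain ⟨t, hts, htmin⟩ : ∃ t, s + 1 < (mj b t) ^ (b-1) ∧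
          ∀ u, u < t → ¬ (s + 1 < (mj b u) ^ (b-1)) :=
        ⟨Nat.find hex, Nat.find_spec hex, fun u hu => Nat.find_min hex hu⟩
      have hymj : (s+1) * mj b t < mj b (t+1) := by
        calc (s+1) * mj b t < (mj b t) ^ (b-1) * mj b t :=
              Nat.mul_lt_mul_right (mj_pos hb t) |>.mpr hts
        _ = (mj b t) ^ b := by rw [← pow_succ]; congr 1; omega
        _ = mj b (t+1) := (mj_succ t).symm
      have hnlen := nlen_lb hb M hM s t hymj
      have hub : nexpansion (insert 1 M) s ≤ (((s+1) * mj b t : ℕ) : ℝ≥0∞) := by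
        apply sSup_le
        rintro x ⟨r, rfl, hr⟩
        have hry : r < (s+1) * mj b t := by
          by_contra hge
          push_neg at hge
          exact absurd (hr _ hge) (not_le.mpr hnlen)
        exact_mod_cast hry.le
      have hyR : (((s+1) * mj b t : ℕ):ℝ) ≤ (2*(b:ℝ)+8) * (s:ℝ) ^ F := by
        have hsF0 : (0:ℝ) ≤ (s:ℝ) ^ F := Real.rpow_nonneg (by positivity) _
        have hsF1 : (s:ℝ) ≤ (s:ℝ) ^ F := by
          calc (s:ℝ) = (s:ℝ) ^ (1:ℝ) := (Real.rpow_one _).symm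
          _ ≤ (s:ℝ) ^ F := by
              apply Real.rpow_le_rpow_of_exponent_le hsR
              rw [hF, le_div_iff₀ (by linarith)]
              linarith
        have hs1 : ((s:ℝ)+1) ≤ 2 * (s:ℝ) := by linarith
        rcases Nat.eq_zero_or_pos t with ht0 | htpos
        · rw [ht0, mj_zero]
          push_cast
          calc ((s:ℝ)+1) * (b:ℝ) ≤ 2*(s:ℝ)*(b:ℝ) := by nlinarith
          _ = 2*(b:ℝ) * (s:ℝ) := by ring
          _ ≤ 2*(b:ℝ) * (s:ℝ) ^ F := by nlinarith
          _ ≤ (2*(b:ℝ)+8) * (s:ℝ) ^ F := by nlinarith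
        · obtain ⟨u, hu⟩ : ∃ u, t = u + 1 := ⟨t - 1, by omega⟩
          have humin : (mj b u) ^ (b-1) ≤ s + 1 := by
            have := htmin u (by omega)
            omega
          have hmu : (mj b u : ℝ) ≤ ((s:ℝ)+1) ^ (((b:ℝ)-1)⁻¹) := by
            have h1' : ((mj b u : ℕ):ℝ) ^ ((b-1:ℕ)) ≤ ((s:ℝ)+1) := by
              exact_mod_cast humin
            have h2' := root_le (by positivity : (0:ℝ) ≤ ((mj b u:ℕ):ℝ))
              (by omega : 1 ≤ b - 1) h1'
            convert h2' using 3
            rw [Nat.cast_sub (by omega : 1 ≤ b)]; simp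
          have hmt : (mj b t : ℝ) ≤ ((s:ℝ)+1) ^ ((b:ℝ)/((b:ℝ)-1)) := by
            have h1' : (mj b t : ℝ) = ((mj b u : ℝ)) ^ (b:ℕ) := by
              rw [hu, mj_succ]; push_cast; ring
            rw [h1']
            calc ((mj b u : ℝ)) ^ (b:ℕ) ≤ (((s:ℝ)+1) ^ (((b:ℝ)-1)⁻¹)) ^ (b:ℕ) :=
                  pow_le_pow_left₀ (by positivity) hmu _
            _ = ((s:ℝ)+1) ^ ((b:ℝ)/((b:ℝ)-1)) := by
                  rw [← Real.rpow_natCast (((s:ℝ)+1) ^ (((b:ℝ)-1)⁻¹)) b,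
                    ← Real.rpow_mul (by positivity)]
                  congr 1
                  field_simp
          have hyF : (((s+1) * mj b t : ℕ):ℝ) ≤ ((s:ℝ)+1) ^ F := by
            have h1' : (((s+1) * mj b t : ℕ):ℝ) = ((s:ℝ)+1) * (mj b t : ℝ) := by
              push_cast; ring
            rw [h1']
            calc ((s:ℝ)+1) * (mj b t : ℝ)
                ≤ ((s:ℝ)+1) * ((s:ℝ)+1) ^ ((b:ℝ)/((b:ℝ)-1)) :=
                  mul_le_mul_of_nonneg_left hmt (by linarith)
            _ = ((s:ℝ)+1) ^ (1:ℝ) * ((s:ℝ)+1) ^ ((b:ℝ)/((b:ℝ)-1)) := by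
                  rw [Real.rpow_one]
            _ = ((s:ℝ)+1) ^ (1 + (b:ℝ)/((b:ℝ)-1)) := by
                  rw [← Real.rpow_add (by linarith)]
            _ = ((s:ℝ)+1) ^ F := by
                  congr 1
                  rw [hF]; field_simp; ring
          have hF3 : F ≤ 3 := by
            rw [hF, div_le_iff₀ (by linarith)]
            linarith
          have h2F : ((s:ℝ)+1) ^ F ≤ 8 * (s:ℝ) ^ F := by
            calc ((s:ℝ)+1) ^ F ≤ (2*(s:ℝ)) ^ F :=
                  Real.rpow_le_rpow (by linarith) hs1 hF0
            _ = 2 ^ F * (s:ℝ) ^ F := Real.mul_rpow (by norm_num) (by positivity)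
            _ ≤ 2 ^ (3:ℝ) * (s:ℝ) ^ F := by
                  apply mul_le_mul_of_nonneg_right _ (by positivity)
                  exact Real.rpow_le_rpow_of_exponent_le (by norm_num) hF3
            _ = 8 * (s:ℝ) ^ F := by norm_num
          calc (((s+1) * mj b t : ℕ):ℝ) ≤ 8 * (s:ℝ) ^ F := hyF.trans h2F
          _ ≤ (2*(b:ℝ)+8) * (s:ℝ) ^ F := by nlinarith
      calc nexpansion (insert 1 M) s ≤ (((s+1) * mj b t : ℕ) : ℝ≥0∞) := hub
      _ ≤ ENNReal.ofReal ((2*(b:ℝ)+8) * (s:ℝ) ^ F) := by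
          rw [← ENNReal.ofReal_natCast]
          exact ENNReal.ofReal_le_ofReal hyR
end

section
/- Let b ≥ 2 be an integer, let M = { b^{b^j} : j ≥ 0 } ⊆ ℕ, set m_j = b^{b^j}, and define T_0 = b − 1 and T_k = (b^{b^{k−1}(b−1)} − 1) + T_{k−1} for k ≥ 1. Then for every j ≥ 0, max{ |x|_{G'} : 0 ≤ x < m_j } = T_j; i.e., the hardest element to compress below m_j is m_j − 1, whose G'-length is exactly T_j. -/
open scoped ENNReal

private lemma sum_filter_eq_aux (l : Multiset ℕ) (v : ℕ) :
    (l.filter (· = v)).sum = (Multiset.card (l.filter (· = v))) * v := by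
  have h : l.filter (· = v) = Multiset.replicate (Multiset.card (l.filter (· = v))) v := by
    apply Multiset.eq_replicate_card.mpr
    intro m hm
    have h2 := Multiset.of_mem_filter hm
    exact h2
  conv_lhs => rw [h]
  simp [Multiset.sum_replicate, mul_comm]

private lemma split_sum_aux (l : Multiset ℕ) (v : ℕ) :
    l.sum = (Multiset.card (l.filter (· = v))) * v + (l.filter (fun m => ¬ m = v)).sum ∧
    Multiset.card l =
      Multiset.card (l.filter (· = v)) + Multiset.card (l.filter (fun m => ¬ m = v)) := by
  have h := Multiset.filter_add_not (· = v) l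
  constructor
  · conv_lhs => rw [← h]
    rw [Multiset.sum_add, sum_filter_eq_aux]
  · conv_lhs => rw [← h]
    rw [Multiset.card_add]

private lemma lower_bound_aux (b : ℕ) (hb : 2 ≤ b)
    (T : ℕ → ℕ) (hT0 : T 0 = b - 1)
    (hTk : ∀ k : ℕ, 1 ≤ k → T k = (b ^ (b ^ (k - 1) * (b - 1)) - 1) + T (k - 1)) :
    ∀ j q (l : Multiset ℕ),
      (∀ m ∈ l, m = 1 ∨ ∃ i, m = b ^ (b ^ i)) →
      (∀ m ∈ l, m ≤ b ^ (b ^ j)) →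
      l.sum + 1 = (q + 1) * b ^ (b ^ j) → q + T j ≤ Multiset.card l := by
  have hb1 : 1 ≤ b := by omega
  intro j
  induction j with
  | zero =>
    intro q l hmem hle hsum
    have hpow : b ^ (b ^ 0 : ℕ) = b := by norm_num
    rw [hpow] at hle hsum
    obtain ⟨hs, hc⟩ := split_sum_aux l b
    set a := Multiset.card (l.filter (· = b)) with ha
    set c := Multiset.card (l.filter (fun m => ¬ m = b)) with hcdef
    have hones : (l.filter (fun m => ¬ m = b)).sum = c := by
      have h : l.filter (fun m => ¬ m = b) = Multiset.replicate c 1 := by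
        apply Multiset.eq_replicate_card.mpr
        intro m hm
        have hm1 := Multiset.of_mem_filter hm
        have hm2 := Multiset.mem_of_mem_filter hm
        rcases hmem m hm2 with h1 | ⟨i, rfl⟩
        · exact h1
        · exfalso
          apply hm1
          have h3 : b ≤ b ^ b ^ i := by
            calc b = b ^ 1 := (pow_one b).symm
            _ ≤ b ^ b ^ i := Nat.pow_le_pow_right hb1 (Nat.one_le_pow _ _ (by omega))
          exact le_antisymm (hle _ hm2) h3
      rw [h]
      simp
    rw [hones] at hs
    have haq : a ≤ q := by
      have h2 : a * b < (q + 1) * b := by omega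
      have := Nat.lt_of_mul_lt_mul_right h2
      omega
    obtain ⟨t, rfl⟩ : ∃ t, q = a + t := ⟨q - a, by omega⟩
    have e1 : (a + t + 1) * b = a * b + (t * b + b) := by ring
    have e2 : t ≤ t * b := Nat.le_mul_of_pos_right t (by omega)
    omega
  | succ j ih =>
    intro q l hmem hle hsum
    set m := b ^ (b ^ j : ℕ) with hm
    set M1 := b ^ (b ^ (j + 1) : ℕ) with hM1
    set D := b ^ (b ^ j * (b - 1)) with hD
    have hmpos : 1 ≤ m := Nat.one_le_pow _ _ (by omega)
    have hDpos : 1 ≤ D := Nat.one_le_pow _ _ (by omega)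
    have hexp : b ^ j * (b - 1) + b ^ j = b ^ j * b := by
      obtain ⟨c, rfl⟩ : ∃ c, b = c + 2 := ⟨b - 2, by omega⟩
      have h12 : c + 2 - 1 = c + 1 := rfl
      rw [h12]; ring
    have hsplit : M1 = D * m := by
      rw [hM1, hD, hm, ← pow_add, hexp, pow_succ]
    obtain ⟨hs, hc⟩ := split_sum_aux l M1
    set a := Multiset.card (l.filter (· = M1)) with ha
    set l2 := l.filter (fun x => ¬ x = M1) with hl2
    have hmem2 : ∀ x ∈ l2, x = 1 ∨ ∃ i, x = b ^ (b ^ i : ℕ) :=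
      fun x hx => hmem x (Multiset.mem_of_mem_filter hx)
    have hle2 : ∀ x ∈ l2, x ≤ m := by
      intro x hx
      have hxne := Multiset.of_mem_filter hx
      have hxl : x ∈ l := Multiset.mem_of_mem_filter hx
      have hxle := hle x hxl
      rcases hmem x hxl with rfl | ⟨i, rfl⟩
      · exact hmpos
      · have hlt : b ^ (b ^ i : ℕ) < M1 := lt_of_le_of_ne hxle hxne
        rw [hM1] at hlt
        have h1 : (b ^ i : ℕ) < b ^ (j + 1) :=
          (Nat.pow_lt_pow_iff_right (by omega : 1 < b)).mp hlt
        have h2 : i < j + 1 := (Nat.pow_lt_pow_iff_right (by omega : 1 < b)).mp h1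
        exact Nat.pow_le_pow_right hb1 (Nat.pow_le_pow_right hb1 (by omega))
    have haq : a ≤ q := by
      have h2 : a * M1 < (q + 1) * M1 := by omega
      have := Nat.lt_of_mul_lt_mul_right h2
      omega
    obtain ⟨s, rfl⟩ : ∃ s, q = a + s := ⟨q - a, by omega⟩
    have e2 : (a + s + 1) * M1 = a * M1 + (s + 1) * M1 := by ring
    have hsum2 : l2.sum + 1 = (s + 1) * M1 := by omega
    have hq' : ((s + 1) * D - 1) + 1 = (s + 1) * D := by
      have : 0 < (s + 1) * D := Nat.mul_pos (by omega) (by omega)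
      omega
    have hsum3 : l2.sum + 1 = (((s + 1) * D - 1) + 1) * m := by
      rw [hq', hsum2, hsplit, mul_assoc]
    have hIH := ih ((s + 1) * D - 1) l2 hmem2 hle2 hsum3
    have hT : T (j + 1) = (D - 1) + T j := by
      rw [hD]
      have h := hTk (j + 1) (by omega)
      simpa using h
    have e3 : (s + 1) * D = s * D + D := by ring
    have hsd : s ≤ s * D := Nat.le_mul_of_pos_right s (by omega)
    omega

private lemma upper_bound_aux (b : ℕ) (hb : 2 ≤ b)
    (T : ℕ → ℕ) (hT0 : T 0 = b - 1)
    (hTk : ∀ k : ℕ, 1 ≤ k → T k = (b ^ (b ^ (k - 1) * (b - 1)) - 1) + T (k - 1)) :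
    ∀ j x, x < b ^ (b ^ j : ℕ) →
      ∃ l : Multiset ℕ, (∀ m ∈ l, m = 1 ∨ ∃ i, m = b ^ (b ^ i : ℕ)) ∧ l.sum = x ∧
        Multiset.card l ≤ T j := by
  have hb1 : 1 ≤ b := by omega
  intro j
  induction j with
  | zero =>
    intro x hx
    have hpow : b ^ (b ^ 0 : ℕ) = b := by norm_num
    rw [hpow] at hx
    refine ⟨Multiset.replicate x 1, ?_, ?_, ?_⟩
    · intro m hm
      left
      exact Multiset.eq_of_mem_replicate hm
    · simp
    · simp [hT0]; omega
  | succ j ih =>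
    intro x hx
    set m := b ^ (b ^ j : ℕ) with hm
    set M1 := b ^ (b ^ (j + 1) : ℕ) with hM1
    set D := b ^ (b ^ j * (b - 1)) with hD
    have hmpos : 0 < m := Nat.pow_pos (by omega)
    have hDpos : 0 < D := Nat.pow_pos (by omega)
    have hexp : b ^ j * (b - 1) + b ^ j = b ^ j * b := by
      obtain ⟨c, rfl⟩ : ∃ c, b = c + 2 := ⟨b - 2, by omega⟩
      have h12 : c + 2 - 1 = c + 1 := rfl
      rw [h12]; ring
    have hsplit : M1 = D * m := by
      rw [hM1, hD, hm, ← pow_add, hexp, pow_succ]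
    have hr : x % m < m := Nat.mod_lt _ hmpos
    obtain ⟨l0, hmem0, hsum0, hcard0⟩ := ih (x % m) hr
    refine ⟨Multiset.replicate (x / m) m + l0, ?_, ?_, ?_⟩
    · intro y hy
      rcases Multiset.mem_add.mp hy with h | h
      · right
        exact ⟨j, Multiset.eq_of_mem_replicate h⟩
      · exact hmem0 y h
    · rw [Multiset.sum_add, Multiset.sum_replicate, hsum0, smul_eq_mul]
      rw [mul_comm]
      exact Nat.div_add_mod x m
    · rw [Multiset.card_add, Multiset.card_replicate]
      have hqD : x / m < D := by
        rw [Nat.div_lt_iff_lt_mul hmpos, mul_comm]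
        rw [hsplit] at hx
        rw [mul_comm m D]
        exact hx
      have hT : T (j + 1) = (D - 1) + T j := by
        rw [hD]
        have h := hTk (j + 1) (by omega)
        simpa using h
      omega

/-- **The elements `m_j - 1` are the hardest to compress.**
Let `b ≥ 2`, `M = { b^{b^j} : j ≥ 0 } ⊆ ℕ`, `G' = {1} ∪ M`, `m_j = b^{b^j}`, and define
`T_0 = b - 1` and `T_k = (b^{b^{k-1}(b-1)} - 1) + T_{k-1}` for `k ≥ 1`. Then for every
`j ≥ 0`, `max{ |x|_{G'} : 0 ≤ x < m_j } = T_j`: every `x < m_j` has `|x|_{G'} ≤ T_j`,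
and the hardest element `m_j - 1` has `|m_j - 1|_{G'}` exactly `T_j`. -/
theorem hardest_elements_double_log
    (b : ℕ) (hb : 2 ≤ b)
    (M : Set ℕ) (hM : M = {x | ∃ j : ℕ, x = b ^ (b ^ j)})
    (T : ℕ → ℕ) (hT0 : T 0 = b - 1)
    (hTk : ∀ k : ℕ, 1 ≤ k → T k = (b ^ (b ^ (k - 1) * (b - 1)) - 1) + T (k - 1)) :
    ∀ j : ℕ,
      (∀ x : ℕ, x < b ^ (b ^ j) → nlen (insert 1 M) x ≤ ((T j : ℕ) : ℕ∞)) ∧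
      nlen (insert 1 M) (b ^ (b ^ j) - 1) = ((T j : ℕ) : ℕ∞) := by
  have hmemS : ∀ y : ℕ, (y = 1 ∨ ∃ i, y = b ^ (b ^ i : ℕ)) ↔ y ∈ insert 1 M := by
    intro y
    subst hM
    simp [Set.mem_insert_iff]
  have hup : ∀ j x, x < b ^ (b ^ j : ℕ) →
      nlen (insert 1 M) x ≤ ((T j : ℕ) : ℕ∞) := by
    intro j x hx
    obtain ⟨l, h1, h2, h3⟩ := upper_bound_aux b hb T hT0 hTk j x hx
    calc nlen (insert 1 M) x ≤ ((Multiset.card l : ℕ) : ℕ∞) :=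
          sInf_le ⟨l, fun y hy => (hmemS y).mp (h1 y hy), h2, rfl⟩
    _ ≤ ((T j : ℕ) : ℕ∞) := by exact_mod_cast h3
  intro j
  have hpos : 0 < b ^ (b ^ j : ℕ) := Nat.pow_pos (by omega)
  refine ⟨hup j, le_antisymm (hup j _ (by omega)) ?_⟩
  apply le_sInf
  rintro k ⟨l, h1, h2, rfl⟩
  have hle : ∀ y ∈ l, y ≤ b ^ (b ^ j : ℕ) := by
    intro y hy
    have : y ≤ l.sum := Multiset.le_sum_of_mem hy
    omega
  have hsum : l.sum + 1 = (0 + 1) * b ^ (b ^ j : ℕ) := by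
    rw [h2]; omega
  have hlow := lower_bound_aux b hb T hT0 hTk j 0 l
    (fun y hy => (hmemS y).mpr (h1 y hy)) hle hsum
  simp only [zero_add] at hlow
  exact_mod_cast hlow
end
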